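/- For s > 2 and digits c_1,…,c_n ∈ {1,…,s-1}, the diameter of the cylinder Δ'_{c_1…c_n} (i.e., sup minus inf) equals (s^{s-1} − 1 − (s−1)^2) / ((s−1)(s^{s-1}−1) s^{c_1+⋯+c_n}). -/

import Mathlib

open Finset

/-- The term of the series: `c n / s ^ (c 1 + ... + c (n+1))` (0-indexed). -/
noncomputable def sTerm (s : ℕ) (c : ℕ → ℕ) (n : ℕ) : ℝ :=
  (c n : ℝ) / (s : ℝ) ^ (∑ k ∈ Finset.range (n + 1), c k)

/-- `x = Σ_{k=1}^∞ c_k / s^{c_1+⋯+c_k}`. -/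
noncomputable def sVal (s : ℕ) (c : ℕ → ℕ) : ℝ := ∑' n : ℕ, sTerm s c n

/-- The sequence `(c_k)` has all terms in `{1, ..., s-1}`. -/
def sValid (s : ℕ) (c : ℕ → ℕ) : Prop := ∀ k, 1 ≤ c k ∧ c k ≤ s - 1

/-- The set `S_{(s,0)}`. -/
def Sset (s : ℕ) : Set ℝ := { x | ∃ c : ℕ → ℕ, sValid s c ∧ x = sVal s c }

/-- The cylinder `Δ'_{c_1 ... c_n}` of rank `n` with base the first `n` terms of `c`. -/
def cyl (s n : ℕ) (c : ℕ → ℕ) : Set ℝ :=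
  { x | ∃ c' : ℕ → ℕ, sValid s c' ∧ (∀ k < n, c' k = c k) ∧ x = sVal s c' }

/-- The cylinder `Δ'_{c_1 ... c_n p}`: prefix of length `n` from `c`, next digit `p`. -/
def cylExt (s n : ℕ) (c : ℕ → ℕ) (p : ℕ) : Set ℝ :=
  { x | ∃ c' : ℕ → ℕ, sValid s c' ∧ (∀ k < n, c' k = c k) ∧ c' n = p ∧ x = sVal s c' }

/-- `g_n = Σ_{k=1}^n c_k / s^{c_1+⋯+c_k}`. -/
noncomputable def gPart (s n : ℕ) (c : ℕ → ℕ) : ℝ := ∑ k ∈ Finset.range n, sTerm s c k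

namespace Stmt5Aux

/-- cross inequality `e (σ^d - 1) ≤ d (σ^e - 1)` for `1 ≤ d ≤ e`. -/
lemma cross (σ : ℝ) (hσ : 2 ≤ σ) {d e : ℕ} (hd : 1 ≤ d) (hde : d ≤ e) :
    (e : ℝ) * (σ ^ d - 1) ≤ (d : ℝ) * (σ ^ e - 1) := by
  induction e, hde using Nat.le_induction with
  | base => exact le_rfl
  | succ e hde ih =>
    have hd1 : (1:ℝ) ≤ (d:ℝ) := by exact_mod_cast hd
    have hpow : σ ^ d ≤ σ ^ e := pow_le_pow_right₀ (by linarith) hde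
    have hpe : (0:ℝ) < σ ^ e := pow_pos (by linarith) e
    have h1 : σ ^ d - 1 ≤ (d:ℝ) * σ ^ e * (σ - 1) := by
      have ha : σ ^ d - 1 ≤ σ ^ e := by linarith
      have hb : σ ^ e ≤ (d:ℝ) * σ ^ e := le_mul_of_one_le_left hpe.le hd1
      have hc' : (d:ℝ) * σ ^ e ≤ (d:ℝ) * σ ^ e * (σ - 1) :=
        le_mul_of_one_le_right (by positivity) (by linarith)
      linarith
    have hps : σ ^ (e+1) = σ ^ e * σ := pow_succ σ e
    push_cast
    nlinarith

/-- digit upper inequality: `d (σ - 1) ≤ σ^d - 1`. -/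
lemma digit_up (σ : ℝ) (hσ : 2 ≤ σ) (d : ℕ) :
    (d : ℝ) * (σ - 1) ≤ σ ^ d - 1 := by
  have := one_add_mul_le_pow (a := σ - 1) (by linarith) d
  have h : (1 + (σ - 1)) ^ d = σ ^ d := by ring_nf
  linarith [h ▸ this]

variable {s : ℕ} {c : ℕ → ℕ}

/-- the exponent partial sum. -/
noncomputable def T (s : ℕ) (c : ℕ → ℕ) (k : ℕ) : ℝ :=
  ((s : ℝ) ^ (∑ j ∈ Finset.range k, c j))⁻¹

lemma hσ3 (hs : 2 < s) : (3:ℝ) ≤ (s:ℝ) := by exact_mod_cast hs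

lemma T_pos (hs : 2 < s) (k : ℕ) : 0 < T s c k := by
  have : (0:ℝ) < (s:ℝ) := by have := hσ3 hs; linarith
  exact inv_pos.mpr (pow_pos this _)

lemma sTerm_eq (k : ℕ) : sTerm s c k = (c k : ℝ) * T s c (k+1) := by
  simp [sTerm, T, div_eq_mul_inv]

lemma T_succ (hs : 2 < s) (k : ℕ) : T s c k = T s c (k+1) * (s:ℝ) ^ (c k) := by
  have hs0 : (s:ℝ) ≠ 0 := by have := hσ3 hs; linarith
  simp only [T, Finset.sum_range_succ, pow_add, mul_inv]
  field_simp

lemma E_ge (hc : sValid s c) (k : ℕ) : k ≤ ∑ j ∈ Finset.range k, c j := by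
  calc k = ∑ _j ∈ Finset.range k, 1 := by simp
  _ ≤ _ := Finset.sum_le_sum fun j _ => (hc j).1

lemma T_le (hs : 2 < s) (hc : sValid s c) (k : ℕ) : T s c k ≤ ((s:ℝ)⁻¹) ^ k := by
  have hs1 : (1:ℝ) < (s:ℝ) := by have := hσ3 hs; linarith
  rw [T, ← inv_pow]
  apply pow_le_pow_of_le_one (by positivity)
    (inv_le_one_of_one_le₀ hs1.le) (E_ge hc k)

lemma summable_sTerm (hs : 2 < s) (hc : sValid s c) : Summable (sTerm s c) := by
  have hs1 : (1:ℝ) < (s:ℝ) := by have := hσ3 hs; linarith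
  have hg : Summable (fun k : ℕ => (s:ℝ) * ((s:ℝ)⁻¹) ^ k) :=
    (summable_geometric_of_lt_one (by positivity)
      (inv_lt_one_of_one_lt₀ hs1)).mul_left _
  apply Summable.of_nonneg_of_le (fun k => ?_) (fun k => ?_) hg
  · rw [sTerm_eq]
    exact mul_nonneg (by positivity) (T_pos hs _).le
  · rw [sTerm_eq]
    calc (c k : ℝ) * T s c (k+1) ≤ (s:ℝ) * ((s:ℝ)⁻¹) ^ (k+1) := by
          apply mul_le_mul ?_ (T_le hs hc _) (T_pos hs _).le (by linarith)
          exact_mod_cast (le_trans (hc k).2 (Nat.sub_le s 1))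
      _ ≤ (s:ℝ) * ((s:ℝ)⁻¹) ^ k := by
          apply mul_le_mul_of_nonneg_left ?_ (by linarith)
          apply pow_le_pow_of_le_one (by positivity) (inv_le_one_of_one_le₀ hs1.le)
          omega

lemma T_tendsto (hs : 2 < s) (hc : sValid s c) : Filter.Tendsto (T s c) Filter.atTop (nhds 0) := by
  have hs1 : (1:ℝ) < (s:ℝ) := by have := hσ3 hs; linarith
  apply squeeze_zero (fun k => (T_pos hs k).le) (T_le hs hc)
  exact tendsto_pow_atTop_nhds_zero_of_lt_one (by positivity) (inv_lt_one_of_one_lt₀ hs1)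

/-- sandwich: `m (T k - T (k+1)) ≤ sTerm k ≤ (σ-1)⁻¹ (T k - T (k+1))`. -/
lemma term_le (hs : 2 < s) (hc : sValid s c) (k : ℕ) :
    sTerm s c k ≤ ((s:ℝ) - 1)⁻¹ * (T s c k - T s c (k+1)) := by
  have hσ : (3:ℝ) ≤ (s:ℝ) := hσ3 hs
  have hT := T_pos hs (c := c) (k+1)
  have hdiff : T s c k - T s c (k+1) = T s c (k+1) * ((s:ℝ) ^ (c k) - 1) := by
    rw [T_succ hs]; ring
  have key : (c k : ℝ) ≤ ((s:ℝ) - 1)⁻¹ * ((s:ℝ) ^ (c k) - 1) := by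
    rw [← div_eq_inv_mul, le_div_iff₀ (by linarith)]
    exact digit_up (s:ℝ) (by linarith) (c k)
  rw [sTerm_eq, hdiff]
  calc (c k : ℝ) * T s c (k+1)
      ≤ (((s:ℝ) - 1)⁻¹ * ((s:ℝ) ^ (c k) - 1)) * T s c (k+1) :=
        mul_le_mul_of_nonneg_right key hT.le
    _ = ((s:ℝ) - 1)⁻¹ * (T s c (k+1) * ((s:ℝ) ^ (c k) - 1)) := by ring

lemma term_ge (hs : 2 < s) (hc : sValid s c) (k : ℕ) :
    ((s:ℝ) - 1) / ((s:ℝ) ^ (s - 1) - 1) * (T s c k - T s c (k+1)) ≤ sTerm s c k := by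
  have hσ : (3:ℝ) ≤ (s:ℝ) := hσ3 hs
  have hT := T_pos hs (c := c) (k+1)
  have hpow1 : (1:ℝ) < (s:ℝ) ^ (s - 1) := by
    apply one_lt_pow₀ (by linarith) (by omega)
  have hdiff : T s c k - T s c (k+1) = T s c (k+1) * ((s:ℝ) ^ (c k) - 1) := by
    rw [T_succ hs]; ring
  have hcast : ((s - 1 : ℕ) : ℝ) = (s:ℝ) - 1 := by
    have : 1 ≤ s := by omega
    push_cast [this]; ring
  have hcross := cross (s:ℝ) (by linarith) (hc k).1 (hc k).2
  have key : ((s:ℝ) - 1) / ((s:ℝ) ^ (s - 1) - 1) * ((s:ℝ) ^ (c k) - 1) ≤ (c k : ℝ) := by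
    rw [div_mul_eq_mul_div, div_le_iff₀ (by linarith)]
    calc ((s:ℝ) - 1) * ((s:ℝ) ^ (c k) - 1)
        = ((s - 1 : ℕ) : ℝ) * ((s:ℝ) ^ (c k) - 1) := by rw [hcast]
      _ ≤ (c k : ℝ) * ((s:ℝ) ^ (s - 1) - 1) := hcross
  rw [sTerm_eq, hdiff]
  calc ((s:ℝ) - 1) / ((s:ℝ) ^ (s - 1) - 1) * (T s c (k+1) * ((s:ℝ) ^ (c k) - 1))
      = (((s:ℝ) - 1) / ((s:ℝ) ^ (s - 1) - 1) * ((s:ℝ) ^ (c k) - 1)) * T s c (k+1) := by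
        ring
    _ ≤ (c k : ℝ) * T s c (k+1) := mul_le_mul_of_nonneg_right key hT.le

lemma partial_le (hs : 2 < s) (hc : sValid s c) (N : ℕ) :
    ∑ k ∈ Finset.range N, sTerm s c k ≤ ((s:ℝ) - 1)⁻¹ := by
  have hσ : (3:ℝ) ≤ (s:ℝ) := hσ3 hs
  calc ∑ k ∈ Finset.range N, sTerm s c k
      ≤ ∑ k ∈ Finset.range N, ((s:ℝ) - 1)⁻¹ * (T s c k - T s c (k+1)) :=
        Finset.sum_le_sum fun k _ => term_le hs hc k
    _ = ((s:ℝ) - 1)⁻¹ * (T s c 0 - T s c N) := by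
        rw [← Finset.mul_sum, Finset.sum_range_sub' (T s c)]
    _ ≤ ((s:ℝ) - 1)⁻¹ := by
        have h0 : T s c 0 = 1 := by simp [T]
        have := T_pos hs (c := c) N
        rw [h0]
        have : T s c N > 0 := this
        have h1 : (1 : ℝ) - T s c N ≤ 1 := by linarith
        have h2 : (0:ℝ) < ((s:ℝ) - 1)⁻¹ := inv_pos.mpr (by linarith)
        nlinarith

lemma partial_ge (hs : 2 < s) (hc : sValid s c) (N : ℕ) :
    ((s:ℝ) - 1) / ((s:ℝ) ^ (s - 1) - 1) * (1 - T s c N)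
      ≤ ∑ k ∈ Finset.range N, sTerm s c k := by
  calc ((s:ℝ) - 1) / ((s:ℝ) ^ (s - 1) - 1) * (1 - T s c N)
      = ∑ k ∈ Finset.range N, ((s:ℝ) - 1) / ((s:ℝ) ^ (s - 1) - 1)
          * (T s c k - T s c (k+1)) := by
        rw [← Finset.mul_sum, Finset.sum_range_sub' (T s c)]
        simp [T]
    _ ≤ _ := Finset.sum_le_sum fun k _ => term_ge hs hc k

lemma sVal_le (hs : 2 < s) (hc : sValid s c) : sVal s c ≤ ((s:ℝ) - 1)⁻¹ := by
  have h := ((summable_sTerm hs hc).hasSum).tendsto_sum_nat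
  exact le_of_tendsto h (Filter.Eventually.of_forall (partial_le hs hc))

lemma sVal_ge (hs : 2 < s) (hc : sValid s c) : ((s:ℝ) - 1) / ((s:ℝ) ^ (s - 1) - 1) ≤ sVal s c := by
  have h := ((summable_sTerm hs hc).hasSum).tendsto_sum_nat
  set m : ℝ := ((s:ℝ) - 1) / ((s:ℝ) ^ (s - 1) - 1)
  have hlim : Filter.Tendsto (fun N => m * (1 - T s c N)) Filter.atTop (nhds m) := by
    have := ((tendsto_const_nhds (x := (1:ℝ))).sub (T_tendsto hs hc)).const_mul m
    simpa using this
  exact le_of_tendsto_of_tendsto' hlim h (partial_ge hs hc)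

/-- value of the constant sequence. -/
lemma sVal_const (hs : 2 < s) (d : ℕ) (hd : 1 ≤ d) :
    sVal s (fun _ => d) = (d : ℝ) / ((s:ℝ) ^ d - 1) := by
  have hσ : (3:ℝ) ≤ (s:ℝ) := hσ3 hs
  have hpow1 : (1:ℝ) < (s:ℝ) ^ d := one_lt_pow₀ (by linarith) (by omega)
  set r : ℝ := ((s:ℝ) ^ d)⁻¹ with hr
  have hr0 : 0 ≤ r := by positivity
  have hr1 : r < 1 := inv_lt_one_of_one_lt₀ hpow1
  have hgeo : HasSum (fun k : ℕ => (d:ℝ) * (r ^ k * r)) ((d:ℝ) * ((1 - r)⁻¹ * r)) :=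
    (((hasSum_geometric_of_lt_one hr0 hr1).mul_right r).mul_left _)
  have hterm : ∀ k : ℕ, sTerm s (fun _ => d) k = (d:ℝ) * (r ^ k * r) := by
    intro k
    have hE : (∑ j ∈ Finset.range (k+1), d) = d * (k+1) := by
      simp [Finset.sum_const, mul_comm]
    rw [sTerm, hE, pow_mul, div_eq_mul_inv, ← inv_pow, pow_succ, hr]
  rw [sVal, tsum_congr hterm, hgeo.tsum_eq]
  have hne : (s:ℝ) ^ d - 1 ≠ 0 := by linarith
  have hne2 : (s:ℝ) ^ d ≠ 0 := by positivity
  rw [hr]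
  field_simp

/-- shift decomposition. -/
lemma sVal_shift (hs : 2 < s) (n : ℕ) (hc : sValid s c) :
    sVal s c = gPart s n c
      + ((s:ℝ) ^ (∑ k ∈ Finset.range n, c k))⁻¹ * sVal s (fun k => c (n + k)) := by
  have hσ : (3:ℝ) ≤ (s:ℝ) := hσ3 hs
  have hsum := summable_sTerm hs hc
  have h1 := Summable.sum_add_tsum_nat_add (f := sTerm s c) n hsum
  have hterm : ∀ i : ℕ, sTerm s c (i + n)
      = ((s:ℝ) ^ (∑ k ∈ Finset.range n, c k))⁻¹ * sTerm s (fun k => c (n + k)) i := by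
    intro i
    have hsplit : (∑ k ∈ Finset.range (i + n + 1), c k)
        = (∑ k ∈ Finset.range n, c k) + ∑ k ∈ Finset.range (i + 1), c (n + k) := by
      have : i + n + 1 = n + (i + 1) := by omega
      rw [this, Finset.sum_range_add]
    have hs0 : (s:ℝ) ≠ 0 := by linarith
    rw [sTerm, sTerm, hsplit, pow_add]
    have h2 : c (i + n) = c (n + i) := by rw [Nat.add_comm]
    rw [h2, div_eq_mul_inv, mul_inv, div_eq_mul_inv]
    ring
  rw [sVal, ← h1, gPart]
  congr 1
  rw [tsum_congr hterm, tsum_mul_left]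
  rfl

lemma gPart_congr (n : ℕ) (c c' : ℕ → ℕ) (h : ∀ k < n, c' k = c k) :
    gPart s n c' = gPart s n c := by
  apply Finset.sum_congr rfl
  intro k hk
  rw [Finset.mem_range] at hk
  have h1 : c' k = c k := h k hk
  have h2 : (∑ j ∈ Finset.range (k+1), c' j) = ∑ j ∈ Finset.range (k+1), c j :=
    Finset.sum_congr rfl fun j hj => h j (by rw [Finset.mem_range] at hj; omega)
  rw [sTerm, sTerm, h1, h2]

end Stmt5Aux

open Stmt5Aux in
theorem stmt5 (s n : ℕ) (hs : 2 < s) (c : ℕ → ℕ) (hc : ∀ k < n, 1 ≤ c k ∧ c k ≤ s - 1) :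
    sSup (cyl s n c) - sInf (cyl s n c) =
      ((s : ℝ) ^ (s - 1) - 1 - ((s : ℝ) - 1) ^ 2) /
        (((s : ℝ) - 1) * ((s : ℝ) ^ (s - 1) - 1) * (s : ℝ) ^ (∑ k ∈ Finset.range n, c k)) := by
  have hσ : (3:ℝ) ≤ (s:ℝ) := by exact_mod_cast hs
  set t : ℝ := ((s:ℝ) ^ (∑ k ∈ Finset.range n, c k))⁻¹ with ht
  set M : ℝ := ((s:ℝ) - 1)⁻¹ with hM
  set m : ℝ := ((s:ℝ) - 1) / ((s:ℝ) ^ (s - 1) - 1) with hm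
  have hcastd : ((s - 1 : ℕ) : ℝ) = (s:ℝ) - 1 := by
    have : 1 ≤ s := by omega
    push_cast [this]; ring
  -- the two extremal sequences
  set c₁ : ℕ → ℕ := fun k => if k < n then c k else 1 with hc₁
  set c₂ : ℕ → ℕ := fun k => if k < n then c k else s - 1 with hc₂
  have hval1 : sValid s c₁ := by
    intro k
    by_cases hk : k < n <;> simp only [hc₁, hk, if_true, if_false]
    · exact hc k hk
    · omega
  have hval2 : sValid s c₂ := by
    intro k
    by_cases hk : k < n <;> simp only [hc₂, hk, if_true, if_false]
    · exact hc k hk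
    · omega
  have hpre1 : ∀ k < n, c₁ k = c k := fun k hk => by simp [hc₁, hk]
  have hpre2 : ∀ k < n, c₂ k = c k := fun k hk => by simp [hc₂, hk]
  -- sums of prefixes agree
  have hpresum : ∀ c' : ℕ → ℕ, (∀ k < n, c' k = c k) →
      (∑ k ∈ Finset.range n, c' k) = ∑ k ∈ Finset.range n, c k := by
    intro c' h
    exact Finset.sum_congr rfl fun k hk => h k (Finset.mem_range.mp hk)
  -- generic value formula for members
  have hdecomp : ∀ c' : ℕ → ℕ, sValid s c' → (∀ k < n, c' k = c k) →
      sVal s c' = gPart s n c + t * sVal s (fun k => c' (n + k)) := by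
    intro c' hv hp
    rw [sVal_shift hs n hv, gPart_congr n c c' hp, hpresum c' hp]
  have hpow1 : (1:ℝ) < (s:ℝ) ^ (s - 1) := one_lt_pow₀ (by linarith) (by omega)
  have ht0 : 0 < t := by rw [ht]; positivity
  -- sup
  have hsup : IsGreatest (cyl s n c) (gPart s n c + t * M) := by
    constructor
    · refine ⟨c₁, hval1, hpre1, ?_⟩
      rw [hdecomp c₁ hval1 hpre1]
      have : (fun k => c₁ (n + k)) = fun _ => 1 := by
        funext k; simp [hc₁]
      rw [this, sVal_const hs 1 le_rfl]
      simp [hM]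
    · rintro x ⟨c', hv, hp, rfl⟩
      rw [hdecomp c' hv hp]
      have hvs : sValid s (fun k => c' (n + k)) := fun k => hv (n + k)
      have := sVal_le hs hvs
      have := mul_le_mul_of_nonneg_left this ht0.le
      linarith
  -- inf
  have hinf : IsLeast (cyl s n c) (gPart s n c + t * m) := by
    constructor
    · refine ⟨c₂, hval2, hpre2, ?_⟩
      rw [hdecomp c₂ hval2 hpre2]
      have : (fun k => c₂ (n + k)) = fun _ => s - 1 := by
        funext k; simp [hc₂]
      rw [this, sVal_const hs (s-1) (by omega), hcastd]
    · rintro x ⟨c', hv, hp, rfl⟩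
      rw [hdecomp c' hv hp]
      have hvs : sValid s (fun k => c' (n + k)) := fun k => hv (n + k)
      have := sVal_ge hs hvs
      have := mul_le_mul_of_nonneg_left this ht0.le
      linarith
  rw [hsup.csSup_eq, hinf.csInf_eq]
  have h1 : (s:ℝ) - 1 ≠ 0 := by linarith
  have h2 : (s:ℝ) ^ (s - 1) - 1 ≠ 0 := by linarith
  have h3 : (s:ℝ) ^ (∑ k ∈ Finset.range n, c k) ≠ 0 := by positivity
  rw [hM, hm, ht]
  field_simp
  ring
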